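/- Fix constants μ < 0, σ > 0, r > 0, α ∈ (0,1), k > 0. Let γ₋ := 1/2 − μ/σ² − √((1/2 − μ/σ²)² + 2r/σ²) (so γ₋ < 0), δ(α) := αμ + σ²α(α−1)/2, and D := r − δ(α) (so D > 0). On (0,∞) define I(x) := (1/γ₋)(α x^{α−γ₋}/D − k x^{1−γ₋}), z* := (α/(kD))^{1/(1−α)}, and x̂ := (α(α−γ₋)/(kD(1−γ₋)))^{1/(1−α)}. Then: (i) 0 < x̂ < z*; (ii) I is strictly decreasing on (0,x̂] and strictly increasing on [x̂,∞); (iii) I(x) < 0 for x ∈ (0,z*), I(z*) = 0, and I(x) > 0 for x > z*; (iv) I(x) → 0 as x → 0 from the right. -/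

import Mathlib

open Set Filter Topology

set_option maxHeartbeats 1000000 in
/-- Shape properties of `I` in the GBM example (Lemma 4 / Proposition 7). -/
theorem stmt18 (μ σ r α k γm δα D zstar xhat : ℝ) (I : ℝ → ℝ)
    (hμ : μ < 0) (hσ : 0 < σ) (hr : 0 < r) (hα : α ∈ Set.Ioo (0:ℝ) 1)
    (hk : 0 < k)
    (hγm : γm = 1/2 - μ/σ^2 - Real.sqrt ((1/2 - μ/σ^2)^2 + 2*r/σ^2))
    (hδ : δα = α*μ + σ^2*α*(α-1)/2) (hD : D = r - δα)
    (hI : ∀ x, 0 < x → I x = (1/γm) * (α * x ^ (α - γm) / D - k * x ^ (1 - γm)))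
    (hz : zstar = (α/(k*D)) ^ (1/(1-α)))
    (hx : xhat = (α*(α-γm)/(k*D*(1-γm))) ^ (1/(1-α))) :
    (0 < xhat ∧ xhat < zstar) ∧
    (∀ x ∈ Set.Ioc 0 xhat, ∀ y ∈ Set.Ioc 0 xhat, x < y → I y < I x) ∧
    (∀ x ∈ Set.Ici xhat, ∀ y ∈ Set.Ici xhat, x < y → I x < I y) ∧
    (∀ x, 0 < x → x < zstar → I x < 0) ∧
    I zstar = 0 ∧
    (∀ x, zstar < x → 0 < I x) ∧
    Tendsto I (𝓝[>] 0) (𝓝 0) := by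
  obtain ⟨hα0, hα1⟩ := hα
  have hσ2 : (0:ℝ) < σ^2 := by positivity
  -- γm < 0
  have hγneg : γm < 0 := by
    have h1 : (1/2 - μ/σ^2) ≤ Real.sqrt ((1/2 - μ/σ^2)^2) := by
      rw [Real.sqrt_sq_eq_abs]; exact le_abs_self _
    have h2 : Real.sqrt ((1/2 - μ/σ^2)^2) < Real.sqrt ((1/2 - μ/σ^2)^2 + 2*r/σ^2) := by
      apply Real.sqrt_lt_sqrt (by positivity)
      have : (0:ℝ) < 2*r/σ^2 := by positivity
      linarith
    rw [hγm]; linarith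
  -- D > 0
  have hDpos : 0 < D := by
    rw [hD, hδ]
    nlinarith [mul_pos hα0 (neg_pos.mpr hμ),
      mul_pos (mul_pos hσ2 hα0) (sub_pos.mpr hα1)]
  have h1α : (0:ℝ) < 1 - α := by linarith
  have hαγ : 0 < α - γm := by linarith
  have h1γ : 0 < 1 - γm := by linarith
  have hc1 : 0 < α/(k*D) := by positivity
  have hc2 : 0 < α*(α-γm)/(k*D*(1-γm)) := by positivity
  have hzpos : 0 < zstar := by rw [hz]; positivity
  have hxpos : 0 < xhat := by rw [hx]; positivity
  have hexp : 0 < 1/(1-α) := by positivity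
  have hα1' : α - 1 < 0 := by linarith
  -- xhat < zstar
  have hxz : xhat < zstar := by
    rw [hx, hz]
    apply Real.rpow_lt_rpow (le_of_lt hc2) _ hexp
    rw [div_lt_div_iff₀ (by positivity) (by positivity)]
    nlinarith [mul_pos (mul_pos hk hDpos) (mul_pos hα0 h1α)]
  -- key rpow arithmetic
  have key : ∀ c : ℝ, 0 < c → (c ^ (1/(1-α))) ^ (α - 1) = c⁻¹ := by
    intro c hc
    rw [← Real.rpow_mul hc.le, show (1/(1-α))*(α-1) = -1 by field_simp; ring, Real.rpow_neg_one]
  have hxhat_pow : xhat ^ (α - 1) = k*D*(1-γm)/(α*(α-γm)) := by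
    rw [hx, key _ hc2, inv_div]
  have hz_pow : zstar ^ (α - 1) = k*D/α := by
    rw [hz, key _ hc1, inv_div]
  -- the explicit function J
  set J : ℝ → ℝ := fun x => (1/γm) * (α * x ^ (α - γm) / D - k * x ^ (1 - γm)) with hJ
  -- derivative of J
  have hder : ∀ x : ℝ, 0 < x →
      HasDerivAt J ((x ^ (-γm) / γm) * (α*(α-γm)* x^(α-1) / D - k*(1-γm))) x := by
    intro x hxp
    have h1 : HasDerivAt (fun y : ℝ => y ^ (α - γm)) ((α - γm) * x ^ (α - γm - 1)) x :=
      Real.hasDerivAt_rpow_const (Or.inl hxp.ne')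
    have h2 : HasDerivAt (fun y : ℝ => y ^ (1 - γm)) ((1 - γm) * x ^ (1 - γm - 1)) x :=
      Real.hasDerivAt_rpow_const (Or.inl hxp.ne')
    have h3 := (((h1.const_mul α).div_const D).sub (h2.const_mul k)).const_mul (1/γm)
    refine h3.congr_deriv ?_
    rw [show α - γm - 1 = (α-1) + (-γm) by ring, Real.rpow_add hxp,
      show (1 : ℝ) - γm - 1 = -γm by ring]
    ring
  -- sign of the derivative
  have hEneg : ∀ x : ℝ, 0 < x → x < xhat →
      (x ^ (-γm) / γm) * (α*(α-γm)* x^(α-1) / D - k*(1-γm)) < 0 := by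
    intro x hxp hlt
    have hpow : xhat ^ (α-1) < x ^ (α-1) := Real.rpow_lt_rpow_of_neg hxp hlt hα1'
    rw [hxhat_pow, div_lt_iff₀ (by positivity)] at hpow
    have hbr : 0 < α*(α-γm)* x^(α-1) / D - k*(1-γm) := by
      rw [sub_pos, lt_div_iff₀ hDpos]
      nlinarith
    have hneg : x ^ (-γm) / γm < 0 :=
      div_neg_of_pos_of_neg (Real.rpow_pos_of_pos hxp _) hγneg
    exact mul_neg_of_neg_of_pos hneg hbr
  have hEpos : ∀ x : ℝ, xhat < x →
      0 < (x ^ (-γm) / γm) * (α*(α-γm)* x^(α-1) / D - k*(1-γm)) := by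
    intro x hlt
    have hxp : 0 < x := hxpos.trans hlt
    have hpow : x ^ (α-1) < xhat ^ (α-1) := Real.rpow_lt_rpow_of_neg hxpos hlt hα1'
    rw [hxhat_pow, lt_div_iff₀ (by positivity)] at hpow
    have hbr : α*(α-γm)* x^(α-1) / D - k*(1-γm) < 0 := by
      rw [sub_neg, div_lt_iff₀ hDpos]
      nlinarith
    have hneg : x ^ (-γm) / γm < 0 :=
      div_neg_of_pos_of_neg (Real.rpow_pos_of_pos hxp _) hγneg
    exact mul_pos_of_neg_of_neg hneg hbr
  -- strict antitonicity on (0, xhat]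
  have hanti : StrictAntiOn J (Ioc 0 xhat) := by
    apply strictAntiOn_of_deriv_neg (convex_Ioc 0 xhat)
    · exact fun x hxm => ((hder x hxm.1).continuousAt).continuousWithinAt
    · intro x hxm
      rw [interior_Ioc] at hxm
      rw [(hder x hxm.1).deriv]
      exact hEneg x hxm.1 hxm.2
  have hmono : StrictMonoOn J (Ici xhat) := by
    apply strictMonoOn_of_deriv_pos (convex_Ici xhat)
    · exact fun x hxm => ((hder x (lt_of_lt_of_le hxpos hxm)).continuousAt).continuousWithinAt
    · intro x hxm
      rw [interior_Ici] at hxm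
      rw [(hder x (hxpos.trans hxm)).deriv]
      exact hEpos x hxm
  -- factorization of I
  have hfact : ∀ x : ℝ, 0 < x → I x = (x^(1-γm)/γm) * (α * x^(α-1)/D - k) := by
    intro x hxp
    rw [hI x hxp, show (α - γm) = (α-1)+(1-γm) by ring, Real.rpow_add hxp]
    ring
  have hIz : I zstar = 0 := by
    rw [hfact zstar hzpos, hz_pow]
    have hα0' : α ≠ 0 := hα0.ne'
    have hD0 : D ≠ 0 := hDpos.ne'
    field_simp
    ring
  refine ⟨⟨hxpos, hxz⟩, ?_, ?_, ?_, hIz, ?_, ?_⟩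
  · intro x hx' y hy' hxy
    rw [hI x hx'.1, hI y hy'.1]
    exact hanti hx' hy' hxy
  · intro x hx' y hy' hxy
    rw [hI x (lt_of_lt_of_le hxpos hx'), hI y (lt_of_lt_of_le hxpos hy')]
    exact hmono hx' hy' hxy
  · intro x hxp hlt
    have hpow : zstar ^ (α-1) < x ^ (α-1) := Real.rpow_lt_rpow_of_neg hxp hlt hα1'
    rw [hz_pow, div_lt_iff₀ (by positivity)] at hpow
    rw [hfact x hxp]
    apply mul_neg_of_neg_of_pos
    · exact div_neg_of_pos_of_neg (Real.rpow_pos_of_pos hxp _) hγneg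
    · rw [sub_pos, lt_div_iff₀ hDpos]; nlinarith
  · intro x hlt
    have hxp : 0 < x := hzpos.trans hlt
    have hpow : x ^ (α-1) < zstar ^ (α-1) := Real.rpow_lt_rpow_of_neg hzpos hlt hα1'
    rw [hz_pow, lt_div_iff₀ (by positivity)] at hpow
    rw [hfact x hxp]
    apply mul_pos_of_neg_of_neg
    · exact div_neg_of_pos_of_neg (Real.rpow_pos_of_pos hxp _) hγneg
    · rw [sub_neg, div_lt_iff₀ hDpos]; nlinarith
  -- limit at 0+
  · have hJt : Tendsto J (𝓝[>] 0) (𝓝 0) := by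
      have t1 : Tendsto (fun x : ℝ => x ^ (α - γm)) (𝓝 0) (𝓝 0) := by
        have := (Real.continuousAt_rpow_const 0 (α - γm) (Or.inr hαγ.le))
        simpa [Real.zero_rpow hαγ.ne'] using this.tendsto
      have t2 : Tendsto (fun x : ℝ => x ^ (1 - γm)) (𝓝 0) (𝓝 0) := by
        have := (Real.continuousAt_rpow_const 0 (1 - γm) (Or.inr h1γ.le))
        simpa [Real.zero_rpow h1γ.ne'] using this.tendsto
      have : Tendsto J (𝓝 0) (𝓝 ((1/γm) * (α * 0 / D - k * 0))) := by
        exact (((t1.const_mul α).div_const D).sub (t2.const_mul k)).const_mul (1/γm)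
      simpa using this.mono_left nhdsWithin_le_nhds
    apply hJt.congr'
    filter_upwards [self_mem_nhdsWithin] with x hxp
    exact (hI x hxp).symm
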